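/- For the standard free involution τ on S¹ × S³ given by (t, v) ↦ (-t, v), whose orbit space is S¹ × S³, the ℤ₂-index of (S¹ × S³, τ) equals 1. -/

import Mathlib

/-!
STATEMENT 13: For the standard free involution `τ` on `S¹ × S³` given by
`(t, v) ↦ (-t, v)` (orbit space `S¹ × S³`), the ℤ₂-index of `(S¹ × S³, τ)` equals 1.

The ℤ₂-index is the minimal `n` for which there is a continuous map
`f : S¹ × S³ → Sⁿ` with `f(τ x) = -f(x)`, where `Sⁿ` is the unit sphere of `ℝ^{n+1}`.
-/

noncomputable section

/-- The circle `S¹ ⊆ ℂ`. -/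
abbrev S1 : Type := Metric.sphere (0 : ℂ) 1

/-- The 3-sphere `S³ ⊆ ℝ⁴`. -/
abbrev S3 : Type := Metric.sphere (0 : EuclideanSpace ℝ (Fin 4)) 1

/-- The involution `(t, v) ↦ (-t, v)` on `S¹ × S³`. -/
def tau13 (x : S1 × S3) : S1 × S3 := (⟨-x.1.1, by simp⟩, x.2)

/-- The ℤ₂-index of a free involution `τ` on a space `X`: the least `n` admitting a
continuous map `X → Sⁿ` which is equivariant for `τ` and the antipodal involution. -/
def indZ2 (X : Type) [TopologicalSpace X] (τ : X → X) : ℕ :=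
  sInf {n : ℕ | ∃ f : X → Metric.sphere (0 : EuclideanSpace ℝ (Fin (n + 1))) 1,
    Continuous f ∧ ∀ x, ((f (τ x) : EuclideanSpace ℝ (Fin (n + 1))) = -(f x))}

/-- The linear isometry `ℂ ≃ ℝ²`. -/
def cEquiv : ℂ ≃ₗᵢ[ℝ] EuclideanSpace ℝ (Fin 2) :=
  Complex.orthonormalBasisOneI.repr

lemma connected_S1S3 : ConnectedSpace (S1 × S3) := by
  have h1 : IsConnected (Metric.sphere (0 : ℂ) 1) := by
    apply isConnected_sphere ?_ _ zero_le_one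
    rw [Complex.rank_real_complex]
    norm_num
  have h3 : IsConnected (Metric.sphere (0 : EuclideanSpace ℝ (Fin 4)) 1) := by
    apply isConnected_sphere ?_ _ zero_le_one
    rw [← Module.finrank_eq_rank, finrank_euclideanSpace_fin]
    norm_num
  have i1 : ConnectedSpace S1 :=
    Subtype.connectedSpace h1
  have i3 : ConnectedSpace S3 :=
    Subtype.connectedSpace h3
  infer_instance

/-- `ind_{ℤ₂}(S¹ × S³, (t,v) ↦ (-t,v)) = 1`. -/
theorem stmt_13 : indZ2 (S1 × S3) tau13 = 1 := by
  have : ConnectedSpace (S1 × S3) := connected_S1S3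
  have h1 : (1 : ℕ) ∈ {n : ℕ | ∃ f : S1 × S3 →
      Metric.sphere (0 : EuclideanSpace ℝ (Fin (n + 1))) 1,
      Continuous f ∧ ∀ x, ((f (tau13 x) : EuclideanSpace ℝ (Fin (n + 1))) = -(f x))} := by
    refine ⟨fun x => ⟨cEquiv x.1.1, ?_⟩, ?_, ?_⟩
    · have hx := x.1.2
      rw [mem_sphere_iff_norm, sub_zero] at hx
      rw [mem_sphere_iff_norm, sub_zero, cEquiv.norm_map, hx]
    · exact (cEquiv.continuous.comp (continuous_subtype_val.comp continuous_fst)).subtype_mk _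
    · intro x
      simp [tau13, map_neg]
  have h0 : (0 : ℕ) ∉ {n : ℕ | ∃ f : S1 × S3 →
      Metric.sphere (0 : EuclideanSpace ℝ (Fin (n + 1))) 1,
      Continuous f ∧ ∀ x, ((f (tau13 x) : EuclideanSpace ℝ (Fin (n + 1))) = -(f x))} := by
    rintro ⟨f, hf, heq⟩
    set g : S1 × S3 → ℝ := fun x => (f x : EuclideanSpace ℝ (Fin 1)) 0 with hg
    have hgc : Continuous g := by
      exact (continuous_apply 0).comp ((PiLp.continuous_ofLp 2 _).comp (continuous_subtype_val.comp hf))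
    obtain ⟨x₀⟩ := (inferInstance : Nonempty (S1 × S3))
    have hsign : g (tau13 x₀) = - g x₀ := by
      simp only [hg, heq x₀]; rfl
    have hex : ∃ x, g x = 0 := by
      rcases le_total (g x₀) 0 with h | h
      · have := intermediate_value_univ x₀ (tau13 x₀) hgc
          (show (0:ℝ) ∈ Set.Icc (g x₀) (g (tau13 x₀)) by
            rw [hsign]; constructor <;> linarith)
        exact this
      · have := intermediate_value_univ (tau13 x₀) x₀ hgc
          (show (0:ℝ) ∈ Set.Icc (g (tau13 x₀)) (g x₀) by
            rw [hsign]; constructor <;> linarith)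
        exact this
    obtain ⟨x, hx⟩ := hex
    have hfx : (f x : EuclideanSpace ℝ (Fin 1)) = 0 := by
      ext i
      fin_cases i
      simpa using hx
    have := (f x).2
    rw [mem_sphere_iff_norm, sub_zero, hfx, norm_zero] at this
    exact one_ne_zero this.symm
  have hne : {n : ℕ | ∃ f : S1 × S3 →
      Metric.sphere (0 : EuclideanSpace ℝ (Fin (n + 1))) 1,
      Continuous f ∧ ∀ x, ((f (tau13 x) : EuclideanSpace ℝ (Fin (n + 1))) = -(f x))}.Nonempty :=
    ⟨1, h1⟩
  have hle : indZ2 (S1 × S3) tau13 ≤ 1 := Nat.sInf_le h1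
  have hpos : indZ2 (S1 × S3) tau13 ≠ 0 := by
    intro h
    rw [indZ2, Nat.sInf_eq_zero] at h
    rcases h with h | h
    · exact h0 h
    · exact hne.ne_empty h
  omega
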